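/- Let ρ ∈ ℂ and let (a_k), (b_k) be sequences of complex numbers. Define T_0 = 0, T_1 = 1, T_{k+1} = (1+ρ)T_k − ρT_{k−1}, and q_0 = 0, q_1 = 1, q_{k+1} = (1+ρ+a_k)q_k − (ρ+b_k)q_{k−1}. Then for all k ≥ 2, q_k − T_k = Σ_{j=1}^{k−1} (a_j q_j − b_j q_{j−1}) T_{k−j}. -/

import Mathlib

theorem stmt_3 (ρ : ℂ) (a b : ℕ → ℂ) (T q : ℕ → ℂ)
    (hT0 : T 0 = 0) (hT1 : T 1 = 1)
    (hTrec : ∀ k, T (k + 2) = (1 + ρ) * T (k + 1) - ρ * T k)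
    (hq0 : q 0 = 0) (hq1 : q 1 = 1)
    (hqrec : ∀ k, q (k + 2) = (1 + ρ + a (k + 1)) * q (k + 1) - (ρ + b (k + 1)) * q k) :
    ∀ k, 2 ≤ k →
      q k - T k = ∑ j ∈ Finset.Icc 1 (k - 1), (a j * q j - b j * q (j - 1)) * T (k - j) := by
  suffices h : ∀ k, q k - T k = ∑ j ∈ Finset.Icc 1 (k - 1), (a j * q j - b j * q (j - 1)) * T (k - j) by
    intro k _; exact h k
  intro k
  induction k using Nat.strong_induction_on with
  | _ k ih =>
    match k with
    | 0 => simp [hq0, hT0]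
    | 1 => simp [hq1, hT1]
    | (n+2) =>
      have ih1 := ih (n+1) (by omega)
      have ih0 := ih n (by omega)
      have hdrop : ∑ j ∈ Finset.Icc 1 n, (a j * q j - b j * q (j-1)) * T (n - j)
          = ∑ j ∈ Finset.Icc 1 (n - 1), (a j * q j - b j * q (j-1)) * T (n - j) := by
        cases n with
        | zero => rfl
        | succ m =>
          rw [Finset.sum_Icc_succ_top (by omega)]
          simp [hT0]
      rw [hqrec, hTrec]
      have h1 : (n+2) - 1 = n + 1 := rfl
      rw [h1, Finset.sum_Icc_succ_top (by omega)]
      have hsplit : ∑ j ∈ Finset.Icc 1 n, (a j * q j - b j * q (j-1)) * T (n + 2 - j)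
          = (1+ρ) * ∑ j ∈ Finset.Icc 1 n, (a j * q j - b j * q (j-1)) * T (n + 1 - j)
            - ρ * ∑ j ∈ Finset.Icc 1 n, (a j * q j - b j * q (j-1)) * T (n - j) := by
        rw [Finset.mul_sum, Finset.mul_sum, ← Finset.sum_sub_distrib]
        apply Finset.sum_congr rfl
        intro j hj
        simp only [Finset.mem_Icc] at hj
        have e2 : n + 2 - j = (n - j) + 2 := by omega
        have e1 : n + 1 - j = (n - j) + 1 := by omega
        rw [e2, e1, hTrec]
        ring
      rw [hsplit, hdrop, ← ih0]
      have h2 : (n+1) - 1 = n := rfl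
      rw [h2] at ih1
      rw [← ih1]
      have h3 : n + 2 - (n+1) = 1 := by omega
      rw [h3, hT1]
      simp only [Nat.add_sub_cancel]
      ring
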